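/- Assume r > 1/2 (equivalently n ≥ m) and 0 < d < r. Then the four-variable system (S) admits a unique positive eigenvalue λ, given by λ = min( d/(1+ρ), 1/4, (r−d)/(2r−1+ρ) ), and this value is strictly positive. -/

import Mathlib

open Finset

/-- The four-variable system (S), with variables `y1 = y_1`, `yn = y_n`,
`yn1 = y_{n+1}`, `ynm = y_{n+m}`. -/
def Ssol (n m : ℕ) (a : ℕ → ℝ) (lam y1 yn yn1 ynm : ℝ) : Prop :=
  yn = min ((1 - (a n + a (n + m))) - 2 * lam + y1 + yn1 - ynm)
      ((∑ i ∈ Finset.Icc 1 (n - 1), a i) - ((n : ℝ) - 1) * lam + y1) ∧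
  ynm = min ((1 - (a n + a (n + m))) - lam + y1 + yn1 - yn)
      ((∑ i ∈ Finset.Icc (n + 1) (n + m - 1), a i) - ((m : ℝ) - 1) * lam + yn1) ∧
  y1 = min (a n - lam + (yn + ynm) / 2)
      ((∑ i ∈ Finset.Icc 1 (n - 1), (1 - a i)) - ((n : ℝ) - 1) * lam + yn) ∧
  yn1 = min (a (n + m) - lam + (yn + ynm) / 2)
      ((∑ i ∈ Finset.Icc (n + 1) (n + m - 1), (1 - a i)) - ((m : ℝ) - 1) * lam + ynm)

private lemma min_split' {y p q : ℝ} (h : y = min p q) :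
    y ≤ p ∧ y ≤ q ∧ (y = p ∨ y = q) := by
  refine ⟨h.le.trans (min_le_left _ _), h.le.trans (min_le_right _ _), ?_⟩
  rcases le_total p q with hh | hh
  · left; rw [h, min_eq_left hh]
  · right; rw [h, min_eq_right hh]

private lemma eq_min_of' {y p q : ℝ} (h1 : y ≤ p) (h2 : y ≤ q) (h3 : p ≤ y ∨ q ≤ y) :
    y = min p q :=
  le_antisymm (le_min h1 h2)
    (h3.elim (fun h => (min_le_left p q).trans h) (fun h => (min_le_right p q).trans h))

set_option maxHeartbeats 2000000 in
theorem stmt16 (n m : ℕ) (hn : 2 ≤ n) (hm : 2 ≤ m) (a : ℕ → ℝ)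
    (ha : ∀ i : ℕ, 1 ≤ i → i ≤ n + m → 0 ≤ a i ∧ a i ≤ 1)
    (hprio : a n + a (n + m) ≤ 1)
    (d r ρ : ℝ) (hd : d = (∑ i ∈ Finset.Icc 1 (n + m), a i) / ((n : ℝ) + (m : ℝ) - 1))
    (hr : r = (n : ℝ) / ((n : ℝ) + (m : ℝ) - 1))
    (hρ : ρ = 1 / ((n : ℝ) + (m : ℝ) - 1))
    (hr2 : 1 / 2 < r) (hd0 : 0 < d) (hdr : d < r)
    (lam : ℝ)
    (hlam : lam = min (d / (1 + ρ)) (min (1 / 4) ((r - d) / (2 * r - 1 + ρ)))) :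
    0 < lam ∧ (∃ y1 yn yn1 ynm : ℝ, Ssol n m a lam y1 yn yn1 ynm) ∧
      ∀ lam' : ℝ, 0 < lam' →
        (∃ y1 yn yn1 ynm : ℝ, Ssol n m a lam' y1 yn yn1 ynm) → lam' = lam := by
  have hn2 : (2:ℝ) ≤ (n:ℝ) := by exact_mod_cast hn
  have hm2 : (2:ℝ) ≤ (m:ℝ) := by exact_mod_cast hm
  have hN : (0:ℝ) < (n:ℝ) + (m:ℝ) - 1 := by linarith
  -- the sums
  have hsplit : ∑ i ∈ Finset.Icc 1 (n + m), a i =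
      (∑ i ∈ Finset.Icc 1 (n-1), a i) + a n +
      (∑ i ∈ Finset.Icc (n+1) (n+m-1), a i) + a (n+m) := by
    have e0 : Finset.Icc 1 (n+m) = Finset.Ioc 0 (n+m) := by ext x; simp; omega
    have e1 : Finset.Icc 1 (n-1) = Finset.Ioc 0 (n-1) := by ext x; simp; omega
    have e2 : Finset.Icc (n+1) (n+m-1) = Finset.Ioc n (n+m-1) := by ext x; simp
    have s1 : Finset.Ioc (n-1) n = {n} := by ext x; simp; omega
    have s2 : Finset.Ioc (n+m-1) (n+m) = {n+m} := by ext x; simp; omega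
    have h01 := Finset.sum_Ioc_consecutive a (by omega : 0 ≤ n-1) (by omega : n-1 ≤ n+m)
    have h02 := Finset.sum_Ioc_consecutive a (by omega : n-1 ≤ n) (by omega : n ≤ n+m)
    have h03 := Finset.sum_Ioc_consecutive a (by omega : n ≤ n+m-1) (by omega : n+m-1 ≤ n+m)
    rw [e0, e1, e2, ← h01, ← h02, ← h03, s1, s2, Finset.sum_singleton, Finset.sum_singleton]
    ring
  have hbarn : ∑ i ∈ Finset.Icc 1 (n-1), (1 - a i)
      = ((n:ℝ) - 1) - ∑ i ∈ Finset.Icc 1 (n-1), a i := by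
    rw [Finset.sum_sub_distrib, Finset.sum_const, Nat.card_Icc, nsmul_eq_mul]
    have : ((n - 1 + 1 - 1 : ℕ) : ℝ) = (n:ℝ) - 1 := by
      have h : n - 1 + 1 - 1 = n - 1 := rfl
      rw [h, Nat.cast_sub (by omega)]; simp
    rw [this]; ring
  have hbarm : ∑ i ∈ Finset.Icc (n+1) (n+m-1), (1 - a i)
      = ((m:ℝ) - 1) - ∑ i ∈ Finset.Icc (n+1) (n+m-1), a i := by
    rw [Finset.sum_sub_distrib, Finset.sum_const, Nat.card_Icc, nsmul_eq_mul]
    have : ((n + m - 1 + 1 - (n+1) : ℕ) : ℝ) = (m:ℝ) - 1 := by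
      have h : n + m - 1 + 1 - (n+1) = m - 1 := by omega
      rw [h, Nat.cast_sub (by omega)]; simp
    rw [this]; ring
  obtain ⟨S, hSdef⟩ : ∃ S : ℝ, S = ∑ i ∈ Finset.Icc 1 (n + m), a i := ⟨_, rfl⟩
  have hS : S = (∑ i ∈ Finset.Icc 1 (n-1), a i) + a n +
      (∑ i ∈ Finset.Icc (n+1) (n+m-1), a i) + a (n+m) := hSdef.trans hsplit
  -- basic numeric facts
  have hSN : S = d * ((n:ℝ) + (m:ℝ) - 1) := by rw [hSdef, hd]; field_simp
  have hrN : (n:ℝ) = r * ((n:ℝ) + (m:ℝ) - 1) := by rw [hr]; field_simp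
  have hS0 : 0 < S := by rw [hSN]; exact mul_pos hd0 hN
  have hSn : S < (n:ℝ) := by
    have := mul_lt_mul_of_pos_right hdr hN
    linarith [hSN, hrN]
  have hnm2 : (1:ℝ) < (n:ℝ) - (m:ℝ) + 2 := by
    rw [hr] at hr2
    have := (lt_div_iff₀ hN).1 hr2
    linarith
  have hnm0 : (0:ℝ) < (n:ℝ) - (m:ℝ) + 2 := by linarith
  have hnmpos : (0:ℝ) < (n:ℝ) + (m:ℝ) := by linarith
  -- rewrite lam
  have hlv : lam = min (S / ((n:ℝ) + (m:ℝ)))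
      (min (1/4) (((n:ℝ) - S) / ((n:ℝ) - (m:ℝ) + 2))) := by
    have hdS : d = S / ((n:ℝ) + (m:ℝ) - 1) := by rw [hSN]; field_simp
    have hden1 : 1 + ρ = ((n:ℝ) + (m:ℝ)) / ((n:ℝ) + (m:ℝ) - 1) := by
      rw [hρ]; field_simp; ring
    have hden3 : 2*r - 1 + ρ = ((n:ℝ) - (m:ℝ) + 2) / ((n:ℝ) + (m:ℝ) - 1) := by
      rw [hρ, hr]; field_simp; ring
    have e1 : d / (1 + ρ) = S / ((n:ℝ) + (m:ℝ)) := by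
      rw [hdS, hden1, div_div_div_comm, div_self (ne_of_gt hN), div_one]
    have e3 : (r - d) / (2*r - 1 + ρ) = ((n:ℝ) - S) / ((n:ℝ) - (m:ℝ) + 2) := by
      rw [hdS, hden3, hr, div_sub_div_same, div_div_div_comm, div_self (ne_of_gt hN), div_one]
    rw [hlam, e1, e3]
  have hlampos : 0 < lam := by
    rw [hlv]
    refine lt_min (div_pos hS0 hnmpos) (lt_min (by norm_num) (div_pos (by linarith) hnm0))
  -- cleared-denominator bounds for lam
  have hA1 : lam * ((n:ℝ) + (m:ℝ)) ≤ S := by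
    have := hlv.le.trans (min_le_left _ _)
    exact (le_div_iff₀ hnmpos).1 this
  have hA2 : lam ≤ 1/4 := hlv.le.trans ((min_le_right _ _).trans (min_le_left _ _))
  have hA3 : lam * ((n:ℝ) - (m:ℝ) + 2) ≤ (n:ℝ) - S := by
    have := hlv.le.trans ((min_le_right _ _).trans (min_le_right _ _))
    exact (le_div_iff₀ hnm0).1 this
  have hcase : lam * ((n:ℝ) + (m:ℝ)) = S ∨ lam = 1/4 ∨
      lam * ((n:ℝ) - (m:ℝ) + 2) = (n:ℝ) - S := by
    rcases le_total (S / ((n:ℝ) + (m:ℝ)))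
        (min (1/4) (((n:ℝ) - S) / ((n:ℝ) - (m:ℝ) + 2))) with h | h
    · left
      have : lam = S / ((n:ℝ) + (m:ℝ)) := by rw [hlv, min_eq_left h]
      exact (eq_div_iff (ne_of_gt hnmpos)).1 this
    · rcases le_total (1/4 : ℝ) (((n:ℝ) - S) / ((n:ℝ) - (m:ℝ) + 2)) with h2 | h2
      · right; left; rw [hlv, min_eq_right h, min_eq_left h2]
      · right; right
        have : lam = ((n:ℝ) - S) / ((n:ℝ) - (m:ℝ) + 2) := by
          rw [hlv, min_eq_right h, min_eq_right h2]
        exact (eq_div_iff (ne_of_gt hnm0)).1 this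
  have pn : (0:ℝ) ≤ ((n:ℝ) - 1) * (1 - 2*lam) :=
    mul_nonneg (by linarith) (by linarith)
  have pm : (0:ℝ) ≤ ((m:ℝ) - 1) * (1 - 2*lam) :=
    mul_nonneg (by linarith) (by linarith)
  refine ⟨hlampos, ?_, ?_⟩
  · -- existence
    obtain ⟨bn, hbn⟩ : ∃ t : ℝ, t = ∑ i ∈ Finset.Icc 1 (n-1), a i := ⟨_, rfl⟩
    obtain ⟨bm, hbm⟩ : ∃ t : ℝ, t = ∑ i ∈ Finset.Icc (n+1) (n+m-1), a i := ⟨_, rfl⟩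
    obtain ⟨u, hu⟩ : ∃ t : ℝ, t = ((m:ℝ)+1)*lam - 2 * a (n+m) - bm := ⟨_, rfl⟩
    obtain ⟨v, hv⟩ : ∃ t : ℝ, t = bm - ((m:ℝ)-1)*lam := ⟨_, rfl⟩
    obtain ⟨x, hx⟩ : ∃ t : ℝ, t = min (a n - a (n+m))
        ((((n:ℝ)-1) - bn) - ((n:ℝ)-1)*lam + u) := ⟨_, rfl⟩
    obtain ⟨hx1, hx2, hx3⟩ := min_split' hx
    -- lower bounds for x
    have hxlb : u - (1 - (a n + a (n+m))) + 2*lam + v ≤ x := by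
      rw [hx]
      refine le_min (by linarith [hA2, hS]) (by linarith [hA3, hS])
    have hxlb2 : u - bn + ((n:ℝ)-1)*lam ≤ x := by
      rw [hx]
      refine le_min (by linarith [hA1, hS]) (by linarith [pn])
    refine ⟨x, u, 0, v, ?_, ?_, ?_, ?_⟩
    · -- equation for yn
      rw [← hbn]
      refine eq_min_of' (by linarith [hxlb]) (by linarith [hxlb2]) ?_
      rcases hcase with hc | hc | hc
      · right; linarith [hx1, hS]
      · left; linarith [hx1, hS]
      · left; linarith [hx2, hS]
    · -- equation for ynm
      rw [← hbm]
      refine eq_min_of' (by linarith [hxlb, hlampos]) (by linarith) ?_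
      right; linarith
    · -- equation for y1
      rw [hbarn, ← hbn]
      refine eq_min_of' (by linarith [hx1]) (by linarith [hx2]) ?_
      rcases hx3 with h | h
      · left; linarith
      · right; linarith
    · -- equation for yn1
      rw [hbarm, ← hbm]
      refine eq_min_of' (by linarith) (by linarith [pm]) ?_
      left; linarith
  · -- uniqueness
    rintro lam' hl' ⟨y1, yn, yn1, ynm, h1, h2, h3, h4⟩
    rw [hbarn] at h3
    rw [hbarm] at h4
    obtain ⟨h1a, h1b, h1c⟩ := min_split' h1
    obtain ⟨h2a, h2b, h2c⟩ := min_split' h2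
    obtain ⟨h3a, h3b, h3c⟩ := min_split' h3
    obtain ⟨h4a, h4b, h4c⟩ := min_split' h4
    -- eq 2 must pick its second branch
    have hB : ynm = (∑ i ∈ Finset.Icc (n+1) (n+m-1), a i) - ((m:ℝ)-1)*lam' + yn1 := by
      rcases h2c with h | h
      · exfalso; linarith [h1a]
      · exact h
    -- lam' ≤ 1/4
    have hl4 : lam' ≤ 1/4 := by linarith [h1a, h3a, h4a]
    have pm' : (0:ℝ) < ((m:ℝ) - 1) * (1 - 2*lam') :=
      mul_pos (by linarith) (by linarith)
    have pn' : (0:ℝ) < ((n:ℝ) - 1) * (1 - 2*lam') :=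
      mul_pos (by linarith) (by linarith)
    -- eq 4 must pick its first branch
    have hC : yn1 = a (n+m) - lam' + (yn + ynm) / 2 := by
      rcases h4c with h | h
      · exact h
      · exfalso; linarith [hB, pm']
    have u1 : lam' * ((n:ℝ) + (m:ℝ)) ≤ S := by linarith [h1b, hB, h3a, hC, hS]
    have u3 : lam' * ((n:ℝ) - (m:ℝ) + 2) ≤ (n:ℝ) - S := by
      linarith [h1a, h3b, hB, hS]
    have ucase : lam' * ((n:ℝ) + (m:ℝ)) = S ∨ lam' = 1/4 ∨
        lam' * ((n:ℝ) - (m:ℝ) + 2) = (n:ℝ) - S := by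
      rcases h1c with h1e | h1e <;> rcases h3c with h3e | h3e
      · right; left; linarith [hB, hC]
      · right; right; linarith [hB]
      · left; linarith [hB, hC, hS]
      · exfalso; linarith [pn']
    have hle' : lam' ≤ lam := by
      rw [hlv]
      refine le_min ((le_div_iff₀ hnmpos).2 u1)
        (le_min hl4 ((le_div_iff₀ hnm0).2 u3))
    have hge' : lam ≤ lam' := by
      rcases ucase with h | h | h
      · have h' : lam' = S / ((n:ℝ) + (m:ℝ)) := (eq_div_iff (ne_of_gt hnmpos)).2 h
        have := hlv.le.trans (min_le_left _ _)
        linarith [h']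
      · have := hA2; linarith
      · have h' : lam' = ((n:ℝ) - S) / ((n:ℝ) - (m:ℝ) + 2) :=
          (eq_div_iff (ne_of_gt hnm0)).2 h
        have := hlv.le.trans ((min_le_right _ _).trans (min_le_right _ _))
        linarith [h']
    linarith
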